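/- Let 𝔸 be an alphabet of m variables and 𝔹 an alphabet of n variables. If a partition I = (i₁ ≤ i₂ ≤ ⋯ ≤ i_h) is not contained in the (m,n)-hook, i.e. h > m and i_{h−m} > n, then S_I(𝔸−𝔹) = 0. -/

import Mathlib

open PowerSeries MvPolynomial

/-- `Π_{m ∈ M} (1 − m·z)`. -/
noncomputable def prodOneSub {R : Type*} [CommRing R] (M : Multiset R) : PowerSeries R :=
  (M.map fun m => (1 : PowerSeries R) - PowerSeries.C m * PowerSeries.X).prod

/-- The supersymmetric complete function `h_k(𝔸−𝔹)`, the `k`-th coefficient of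
`Π_{b∈𝔹}(1−bz) / Π_{a∈𝔸}(1−az)`. -/
noncomputable def hAB {R : Type*} [CommRing R] (A B : Multiset R) (k : ℕ) : R :=
  PowerSeries.coeff k (prodOneSub B * (prodOneSub A).invOfUnit 1)

/-- `h_k(𝔸−𝔹)` extended by `0` to negative integer indices. -/
noncomputable def hABz {R : Type*} [CommRing R] (A B : Multiset R) (k : ℤ) : R :=
  if k < 0 then 0 else hAB A B k.toNat

/-- The supersymmetric Schur function `S_I(𝔸−𝔹) = det( h_{i_p+p−q}(𝔸−𝔹) )_{1≤p,q≤h}`,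
for a partition `I` with `h` parts (written in weakly increasing order). -/
noncomputable def schurAB {R : Type*} [CommRing R] (A B : Multiset R) {h : ℕ}
    (I : Fin h → ℕ) : R :=
  Matrix.det (Matrix.of fun p q : Fin h =>
    hABz A B ((I p : ℤ) + (p : ℕ) - (q : ℕ)))

lemma constantCoeff_prodOneSub {R : Type*} [CommRing R] (M : Multiset R) :
    PowerSeries.constantCoeff (prodOneSub M) = 1 := by
  induction M using Multiset.induction_on with
  | empty => simp [prodOneSub]
  | cons a s ih =>
    have : prodOneSub (a ::ₘ s) = ((1 : PowerSeries R) - PowerSeries.C a * PowerSeries.X) * prodOneSub s := by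
      simp [prodOneSub, Multiset.map_cons, Multiset.prod_cons]
    rw [this, map_mul, ih, map_sub, map_one, map_mul, PowerSeries.constantCoeff_X, mul_zero, sub_zero, one_mul]

lemma coeff_prodOneSub_eq_zero {R : Type*} [CommRing R] (M : Multiset R) :
    ∀ k, Multiset.card M < k → PowerSeries.coeff k (prodOneSub M) = 0 := by
  induction M using Multiset.induction_on with
  | empty =>
    intro k hk
    simp only [prodOneSub, Multiset.map_zero, Multiset.prod_zero]
    simp only [Multiset.card_zero] at hk
    rw [PowerSeries.coeff_one, if_neg (by omega)]
  | cons a s ih =>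
    intro k hk
    have hk1 : 1 ≤ k := by simp at hk; omega
    obtain ⟨k', rfl⟩ : ∃ k', k = k' + 1 := ⟨k - 1, by omega⟩
    have : prodOneSub (a ::ₘ s) = prodOneSub s - PowerSeries.C a * (PowerSeries.X * prodOneSub s) := by
      simp [prodOneSub, Multiset.map_cons, Multiset.prod_cons]; ring
    rw [this, map_sub, PowerSeries.coeff_C_mul, PowerSeries.coeff_succ_X_mul]
    rw [ih _ (by simp at hk ⊢; omega), ih _ (by simp at hk ⊢; omega), mul_zero, sub_zero]

lemma rec_hABz {R : Type*} [CommRing R] (A B : Multiset R) (k : ℤ)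
    (hk : (Multiset.card B : ℤ) < k) :
    ∑ j ∈ Finset.range (Multiset.card A + 1),
      PowerSeries.coeff j (prodOneSub A) * hABz A B (k - j) = 0 := by
  have hk0 : 0 ≤ k := le_trans (Int.ofNat_nonneg _) hk.le
  set K := k.toNat with hKdef
  have hKk : (K : ℤ) = k := Int.toNat_of_nonneg hk0
  have hBK : Multiset.card B < K := by omega
  have h1 : prodOneSub A * (prodOneSub B * (prodOneSub A).invOfUnit 1) = prodOneSub B := by
    rw [mul_left_comm, PowerSeries.mul_invOfUnit _ 1 (by rw [constantCoeff_prodOneSub]; rfl),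
      mul_one]
  have h2 : ∑ j ∈ Finset.range (K + 1), PowerSeries.coeff j (prodOneSub A) * hAB A B (K - j) = 0 := by
    have hc := congrArg (PowerSeries.coeff K) h1
    rw [PowerSeries.coeff_mul, Finset.Nat.sum_antidiagonal_eq_sum_range_succ_mk] at hc
    simp only [hAB]
    rw [hc]
    exact coeff_prodOneSub_eq_zero B K hBK
  have ha0 : ∀ j, Multiset.card A < j → PowerSeries.coeff j (prodOneSub A) = 0 :=
    coeff_prodOneSub_eq_zero A
  set N := Multiset.card A + K + 1 with hN
  have e1 : ∑ j ∈ Finset.range (Multiset.card A + 1),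
      PowerSeries.coeff j (prodOneSub A) * hABz A B (k - j)
      = ∑ j ∈ Finset.range (Multiset.card A + 1),
        (if j ≤ K then PowerSeries.coeff j (prodOneSub A) * hAB A B (K - j) else 0) := by
    refine Finset.sum_congr rfl fun j hj => ?_
    by_cases hjK : j ≤ K
    · rw [if_pos hjK]
      congr 1
      unfold hABz
      rw [if_neg (by omega)]
      congr 1
      omega
    · rw [if_neg hjK]
      unfold hABz
      rw [if_pos (by omega), mul_zero]
  have e2 : ∑ j ∈ Finset.range (Multiset.card A + 1),
        (if j ≤ K then PowerSeries.coeff j (prodOneSub A) * hAB A B (K - j) else 0)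
      = ∑ j ∈ Finset.range N,
        (if j ≤ K then PowerSeries.coeff j (prodOneSub A) * hAB A B (K - j) else 0) := by
    refine Finset.sum_subset (show Finset.range (Multiset.card A + 1) ⊆ Finset.range N from Finset.range_subset_range.mpr (by omega)) fun j hj hj' => ?_
    simp only [Finset.mem_range] at hj'
    rw [ha0 j (by omega), zero_mul, ite_self]
  have e3 : ∑ j ∈ Finset.range N,
        (if j ≤ K then PowerSeries.coeff j (prodOneSub A) * hAB A B (K - j) else 0)
      = ∑ j ∈ Finset.range (K + 1), PowerSeries.coeff j (prodOneSub A) * hAB A B (K - j) := by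
    rw [← Finset.sum_subset (show Finset.range (K + 1) ⊆ Finset.range N from Finset.range_subset_range.mpr (by omega))
      (fun j _ hj' => if_neg (by simp only [Finset.mem_range] at hj'; omega))]
    exact Finset.sum_congr rfl fun j hj => if_pos (by simp only [Finset.mem_range] at hj; omega)
  rw [e1, e2, e3, h2]

-- pigeonhole
lemma filter_lt_card {h : ℕ} (c : ℕ) (hch : c ≤ h) :
    (Finset.filter (fun i : Fin h => (i : ℕ) < c) Finset.univ).card = c := by
  have : Finset.filter (fun i : Fin h => (i : ℕ) < c) Finset.univ
      = Finset.map (Fin.castLEEmb hch) Finset.univ := by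
    ext i
    simp only [Finset.mem_filter, Finset.mem_univ, true_and, Finset.mem_map, Fin.castLEEmb]
    constructor
    · intro hi; exact ⟨⟨i, hi⟩, rfl⟩
    · rintro ⟨j, rfl⟩; exact j.isLt
  rw [this, Finset.card_map, Finset.card_univ, Fintype.card_fin]

lemma pigeon {h : ℕ} (c : ℕ) (hc : 0 < c) (hch : c ≤ h) (σ : Equiv.Perm (Fin h)) :
    ∃ i : Fin h, (i : ℕ) < c ∧ c - 1 ≤ ((σ i : Fin h) : ℕ) := by
  by_contra hcon
  push_neg at hcon
  have hcard := Finset.card_le_card_of_injOn σ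
    (s := Finset.filter (fun i : Fin h => (i : ℕ) < c) Finset.univ)
    (t := Finset.filter (fun i : Fin h => (i : ℕ) < c - 1) Finset.univ)
    (fun i hi => by
      simp only [Finset.mem_coe, Finset.mem_filter, Finset.mem_univ, true_and] at hi ⊢
      exact hcon i hi)
    (σ.injective.injOn)
  rw [filter_lt_card c hch, filter_lt_card (c - 1) (by omega)] at hcard
  omega

theorem main_general {R : Type*} [CommRing R] (A B : Multiset R) {m n h : ℕ}
    (hA : Multiset.card A = m) (hB : Multiset.card B = n) (hm : m < h)
    (I : Fin h → ℕ) (hI : Monotone I) (hhook : n < I ⟨h - m - 1, by omega⟩) :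
    schurAB A B I = 0 := by
  classical
  set a : ℕ → R := fun j => PowerSeries.coeff j (prodOneSub A) with ha
  set M : Matrix (Fin h) (Fin h) R :=
    Matrix.of (fun p q : Fin h => hABz A B ((I p : ℤ) + (p : ℕ) - (q : ℕ))) with hM
  set U : Matrix (Fin h) (Fin h) R :=
    Matrix.of (fun r q : Fin h => if (q : ℕ) < h - m then
      (if (q : ℕ) ≤ (r : ℕ) ∧ (r : ℕ) ≤ (q : ℕ) + m then a ((r : ℕ) - (q : ℕ)) else 0)
      else (if r = q then 1 else 0)) with hU
  have ha0 : a 0 = 1 := by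
    rw [ha]; simp only [PowerSeries.coeff_zero_eq_constantCoeff]
    exact constantCoeff_prodOneSub A
  -- U is lower triangular with unit diagonal
  have hUtri : U.BlockTriangular (OrderDual.toDual : Fin h → (Fin h)ᵒᵈ) := by
    intro r q hrq
    have hlt : (r : ℕ) < (q : ℕ) := by
      exact Fin.lt_def.mp (by exact_mod_cast hrq)
    simp only [hU, Matrix.of_apply]
    split_ifs with h1 h2 h3
    · exact absurd h2.1 (by omega)
    · rfl
    · exact absurd (congrArg Fin.val h3) (by omega)
    · rfl
  have hUdet : U.det = 1 := by
    rw [Matrix.det_of_lowerTriangular U hUtri]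
    refine Finset.prod_eq_one fun i _ => ?_
    simp only [hU, Matrix.of_apply]
    split_ifs with h1 h2
    · simp [ha0]
    · omega
    · rfl
  -- the key column computation
  have key : ∀ p q : Fin h, (q : ℕ) < h - m → (h - m - 1 : ℕ) ≤ (p : ℕ) →
      (M * U) p q = 0 := by
    intro p q hq hp
    rw [Matrix.mul_apply]
    have hqm : (q : ℕ) + m < h := by omega
    set emb : Fin (m + 1) → Fin h := fun j => ⟨(q : ℕ) + (j : ℕ), by omega⟩ with hemb
    have hinj : Function.Injective emb := by
      intro x y hxy
      have := congrArg Fin.val hxy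
      simp only [hemb] at this
      exact Fin.ext (by omega)
    have himage : ∑ r : Fin h, M p r * U r q
        = ∑ r ∈ Finset.image emb Finset.univ, M p r * U r q := by
      refine (Finset.sum_subset (Finset.subset_univ _) fun r _ hr => ?_).symm
      have hnotin : ¬((q : ℕ) ≤ (r : ℕ) ∧ (r : ℕ) ≤ (q : ℕ) + m) := by
        intro hcon
        exact hr (Finset.mem_image.mpr ⟨⟨(r : ℕ) - (q : ℕ), by omega⟩, Finset.mem_univ _,
          Fin.ext (by simp [hemb]; omega)⟩)
      simp only [hU, Matrix.of_apply, if_pos hq, if_neg hnotin, mul_zero]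
    rw [himage, Finset.sum_image fun x _ y _ hxy => hinj hxy]
    have hterm : ∀ j : Fin (m + 1),
        M p (emb j) * U (emb j) q = a (j : ℕ) * hABz A B ((I p : ℤ) + (p : ℕ) - (q : ℕ) - (j : ℕ)) := by
      intro j
      have hj : (j : ℕ) ≤ m := by omega
      have hUval : U (emb j) q = a (j : ℕ) := by
        simp only [hU, Matrix.of_apply, hemb, if_pos hq]
        rw [if_pos ⟨by omega, by omega⟩]
        congr 1
        omega
      have hMval : M p (emb j) = hABz A B ((I p : ℤ) + (p : ℕ) - (q : ℕ) - (j : ℕ)) := by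
        simp only [hM, Matrix.of_apply, hemb]
        push_cast
        ring
      rw [hUval, hMval, mul_comm]
    rw [Finset.sum_congr rfl fun j _ => hterm j]
    rw [Fin.sum_univ_eq_sum_range (fun j => a j * hABz A B ((I p : ℤ) + (p : ℕ) - (q : ℕ) - j)) (m + 1)]
    have hk : (Multiset.card B : ℤ) < (I p : ℤ) + (p : ℕ) - (q : ℕ) := by
      have hIp : n < I p := lt_of_lt_of_le hhook (hI (show (⟨h - m - 1, by omega⟩ : Fin h) ≤ p from by
        rw [Fin.le_def]; exact hp))
      have : (q : ℕ) ≤ (p : ℕ) := by omega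
      rw [hB]
      push_cast
      omega
    have := rec_hABz A B ((I p : ℤ) + (p : ℕ) - (q : ℕ)) hk
    rw [hA] at this
    exact this
  -- conclude
  have hdet : (M * U).det = 0 := by
    rw [Matrix.det_apply]
    refine Finset.sum_eq_zero fun σ _ => ?_
    obtain ⟨i, hi1, hi2⟩ := pigeon (h - m) (by omega) (by omega) σ
    have hz : ∏ j : Fin h, (M * U) (σ j) j = 0 :=
      Finset.prod_eq_zero (Finset.mem_univ i) (key (σ i) i hi1 hi2)
    rw [hz, smul_zero]
  have : schurAB A B I = M.det := rfl
  rw [this, ← mul_one M.det, ← hUdet, ← Matrix.det_mul, hdet]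

/-- Vanishing property: if the partition `I = (i₁ ≤ ⋯ ≤ i_h)` is not contained in the
`(m,n)`-hook, i.e. `h > m` and `i_{h−m} > n`, then `S_I(𝔸−𝔹) = 0` for alphabets of
`m` and `n` variables. -/
theorem stmt_11 (m n h : ℕ) (I : Fin h → ℕ) (hI : Monotone I)
    (hm : m < h) (hhook : n < I ⟨h - m - 1, by omega⟩) :
    schurAB
        ((Finset.univ : Finset (Fin m)).val.map
          (fun i => (X (Sum.inl i) : MvPolynomial (Fin m ⊕ Fin n) ℤ)))
        ((Finset.univ : Finset (Fin n)).val.map (fun j => X (Sum.inr j)))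
        I = 0 := by
  exact main_general _ _ (by simp) (by simp) hm I hI hhook
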